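/- Let N ≥ 2, let x¹, …, x^N ∈ ℝ^d, fix i ∈ {1, …, N}, and let m^N = (1/N)∑_{j=1}^N δ_{x^j} and m^{N,−i} = (1/(N−1))∑_{j≠i} δ_{x^j}. Then the squared 2-Wasserstein distance satisfies d₂²(m^N, m^{N,−i}) ≤ (1/(N(N−1))) ∑_{j≠i} |x^i − x^j|². -/

import Mathlib

open MeasureTheory
open scoped BigOperators ENNReal

/-- Squared 2-Wasserstein distance, defined as the infimum over couplings of the
integral of the squared distance. -/
noncomputable def wasserstein2Sq {d : ℕ}
    (μ ν : Measure (EuclideanSpace ℝ (Fin d))) : ℝ :=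
  sInf { r : ℝ |
    ∃ γ : Measure (EuclideanSpace ℝ (Fin d) × EuclideanSpace ℝ (Fin d)),
      IsProbabilityMeasure γ ∧ γ.map Prod.fst = μ ∧ γ.map Prod.snd = ν ∧
      r = ∫ z, ‖z.1 - z.2‖ ^ 2 ∂γ }

lemma map_finset_sum_measure {α β : Type*} [MeasurableSpace α] [MeasurableSpace β]
    {f : α → β} (hf : Measurable f) {ι : Type*} (s : Finset ι) (μ : ι → Measure α) :
    Measure.map f (∑ j ∈ s, μ j) = ∑ j ∈ s, Measure.map f (μ j) := by
  classical
  induction s using Finset.induction with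
  | empty => simp
  | insert _ _ h ih => simp [Finset.sum_insert h, Measure.map_add _ _ hf, ih]

lemma integrable_dirac' {α : Type*} [MeasurableSpace α] [MeasurableSingletonClass α]
    (f : α → ℝ) (a : α) : Integrable f (Measure.dirac a) :=
  (integrable_const (f a)).congr (ae_eq_dirac f).symm

theorem stmt5 {d : ℕ} (N : ℕ) (hN : 2 ≤ N)
    (x : Fin N → EuclideanSpace ℝ (Fin d)) (i : Fin N) :
    wasserstein2Sq
      ((N : ℝ≥0∞)⁻¹ • ∑ j : Fin N, Measure.dirac (x j))
      (((N : ℝ≥0∞) - 1)⁻¹ • ∑ j ∈ Finset.univ.erase i, Measure.dirac (x j))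
    ≤ (1 / ((N : ℝ) * ((N : ℝ) - 1))) * ∑ j ∈ Finset.univ.erase i, ‖x i - x j‖ ^ 2 := by
  classical
  have hN0 : (N : ℝ≥0∞) ≠ 0 := Nat.cast_ne_zero.mpr (by omega)
  have hNtop : (N : ℝ≥0∞) ≠ ∞ := ENNReal.natCast_ne_top N
  have hsub : (N : ℝ≥0∞) - 1 = ((N - 1 : ℕ) : ℝ≥0∞) := by
    rw [ENNReal.natCast_sub]; simp
  have hb0 : ((N - 1 : ℕ) : ℝ≥0∞) ≠ 0 := Nat.cast_ne_zero.mpr (by omega)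
  have hbtop : ((N - 1 : ℕ) : ℝ≥0∞) ≠ ∞ := ENNReal.natCast_ne_top _
  have hNR : (N : ℝ) ≠ 0 := Nat.cast_ne_zero.mpr (by omega)
  have hbR : ((N - 1 : ℕ) : ℝ) ≠ 0 := Nat.cast_ne_zero.mpr (by omega)
  have hbRcast : ((N - 1 : ℕ) : ℝ) = (N : ℝ) - 1 := by push_cast [Nat.cast_sub (by omega : 1 ≤ N)]; ring
  have hN1R : (N : ℝ) - 1 ≠ 0 := by rw [← hbRcast]; exact Nat.cast_ne_zero.mpr (by omega)
  have hcard : (Finset.univ.erase i).card = N - 1 := by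
    rw [Finset.card_erase_of_mem (Finset.mem_univ i)]; simp
  -- set c := coefficient of the second part
  set c : ℝ≥0∞ := ((N : ℝ≥0∞) * ((N - 1 : ℕ) : ℝ≥0∞))⁻¹ with hc
  have hcne : (N : ℝ≥0∞) * ((N - 1 : ℕ) : ℝ≥0∞) ≠ 0 := mul_ne_zero hN0 hb0
  have hcnetop : (N : ℝ≥0∞) * ((N - 1 : ℕ) : ℝ≥0∞) ≠ ∞ := ENNReal.mul_ne_top hNtop hbtop
  have hctop : c ≠ ∞ := by rw [hc]; exact ENNReal.inv_ne_top.mpr hcne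
  have hcToReal : c.toReal = 1 / ((N : ℝ) * ((N : ℝ) - 1)) := by
    rw [hc, ENNReal.toReal_inv, ENNReal.toReal_mul, ENNReal.toReal_natCast,
      ENNReal.toReal_natCast, hbRcast, one_div]
  -- key coefficient identities, proved via toReal
  have toRealInj : ∀ a b : ℝ≥0∞, a ≠ ∞ → b ≠ ∞ → a.toReal = b.toReal → a = b := by
    intro a b ha hb h
    exact (ENNReal.toReal_eq_toReal_iff' ha hb).mp h
  have key1 : (N : ℝ≥0∞)⁻¹ * ((N - 1 : ℕ) : ℝ≥0∞) + c * ((N - 1 : ℕ) : ℝ≥0∞) = 1 := by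
    apply toRealInj _ _ (by finiteness) (by simp)
    rw [ENNReal.toReal_add (by finiteness) (by finiteness)]
    simp only [ENNReal.toReal_mul, ENNReal.toReal_inv, ENNReal.toReal_natCast, hcToReal,
      ENNReal.toReal_one, hbRcast]
    field_simp
    ring
  have key2 : c * ((N - 1 : ℕ) : ℝ≥0∞) = (N : ℝ≥0∞)⁻¹ := by
    apply toRealInj _ _ (by finiteness) (by finiteness)
    simp only [ENNReal.toReal_mul, ENNReal.toReal_inv, ENNReal.toReal_natCast, hcToReal, hbRcast]
    rw [hbRcast] at hbR
    field_simp
  have key3 : (N : ℝ≥0∞)⁻¹ + c = (((N - 1 : ℕ) : ℝ≥0∞))⁻¹ := by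
    apply toRealInj _ _ (by finiteness) (by finiteness)
    rw [ENNReal.toReal_add (by finiteness) hctop]
    simp only [ENNReal.toReal_inv, ENNReal.toReal_natCast, hcToReal, hbRcast]
    rw [hbRcast] at hbR
    field_simp
    ring
  set γ : Measure ((EuclideanSpace ℝ (Fin d) × EuclideanSpace ℝ (Fin d))) :=
    (N : ℝ≥0∞)⁻¹ • ∑ j ∈ Finset.univ.erase i, Measure.dirac ((x j, x j) : (EuclideanSpace ℝ (Fin d) × EuclideanSpace ℝ (Fin d)))
    + c • ∑ j ∈ Finset.univ.erase i, Measure.dirac ((x i, x j) : (EuclideanSpace ℝ (Fin d) × EuclideanSpace ℝ (Fin d))) with hγ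
  have hprob : IsProbabilityMeasure γ := by
    constructor
    rw [hγ]
    simp only [Measure.add_apply, Measure.smul_apply, Measure.finset_sum_apply,
      Measure.dirac_apply_of_mem (Set.mem_univ _), smul_eq_mul]
    simp only [Finset.sum_const, hcard, nsmul_eq_mul, mul_one]
    exact key1
  have hfst : γ.map Prod.fst = (N : ℝ≥0∞)⁻¹ • ∑ j : Fin N, Measure.dirac (x j) := by
    rw [hγ, Measure.map_add _ _ measurable_fst, Measure.map_smul, Measure.map_smul,
      map_finset_sum_measure measurable_fst, map_finset_sum_measure measurable_fst]
    simp only [Measure.map_dirac' measurable_fst]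
    rw [Finset.sum_const, hcard,
      ← Finset.sum_erase_add Finset.univ _ (Finset.mem_univ i), smul_add]
    congr 1
    rw [← Nat.cast_smul_eq_nsmul ℝ≥0∞, smul_smul, key2]
  have hsnd : γ.map Prod.snd
      = ((N : ℝ≥0∞) - 1)⁻¹ • ∑ j ∈ Finset.univ.erase i, Measure.dirac (x j) := by
    rw [hγ, Measure.map_add _ _ measurable_snd, Measure.map_smul, Measure.map_smul,
      map_finset_sum_measure measurable_snd, map_finset_sum_measure measurable_snd]
    simp only [Measure.map_dirac' measurable_snd]
    rw [← add_smul, key3, hsub]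
  set f : (EuclideanSpace ℝ (Fin d) × EuclideanSpace ℝ (Fin d)) → ℝ := fun z => ‖z.1 - z.2‖ ^ 2 with hf
  have hint1 : Integrable f
      ((N : ℝ≥0∞)⁻¹ • ∑ j ∈ Finset.univ.erase i, Measure.dirac ((x j, x j) : (EuclideanSpace ℝ (Fin d) × EuclideanSpace ℝ (Fin d)))) :=
    (integrable_finset_sum_measure.mpr fun j _ => integrable_dirac' f _).smul_measure
      (by finiteness)
  have hint2 : Integrable f
      (c • ∑ j ∈ Finset.univ.erase i, Measure.dirac ((x i, x j) : (EuclideanSpace ℝ (Fin d) × EuclideanSpace ℝ (Fin d)))) :=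
    (integrable_finset_sum_measure.mpr fun j _ => integrable_dirac' f _).smul_measure hctop
  have hInt : ∫ z, ‖z.1 - z.2‖ ^ 2 ∂γ
      = (1 / ((N : ℝ) * ((N : ℝ) - 1))) * ∑ j ∈ Finset.univ.erase i, ‖x i - x j‖ ^ 2 := by
    rw [hγ, integral_add_measure hint1 hint2, integral_smul_measure, integral_smul_measure,
      integral_finset_sum_measure (fun j _ => integrable_dirac' f _),
      integral_finset_sum_measure (fun j _ => integrable_dirac' f _)]
    simp only [integral_dirac, hf, sub_self, norm_zero]
    rw [hcToReal]
    simp [smul_eq_mul]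
  apply csInf_le
  · refine ⟨0, fun r hr => ?_⟩
    obtain ⟨γ', -, -, -, hr⟩ := hr
    rw [hr]
    exact integral_nonneg fun z => by positivity
  · exact ⟨γ, hprob, hfst, hsnd, hInt.symm⟩
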